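/- At the equilibrium strategy pair (a*, d*) of the Attacker-Defender game with equal endowments R, the sum of expected payoffs equals the total endowments less the upper bound: Π_A(a*,d*) + Π_D(a*,d*) = 2R − l*. -/

import Mathlib

/-- Attacker's payoff: `R_A - i + R_D - j` if `i > j`, else `R_A - i`. -/
noncomputable def piA (RA RD i j : ℕ) : ℝ :=
  if j < i then (RA : ℝ) - i + ((RD : ℝ) - j) else (RA : ℝ) - i

/-- Defender's payoff: `0` if `i > j`, else `R_D - j`. -/
noncomputable def piD (RD i j : ℕ) : ℝ :=
  if j < i then 0 else (RD : ℝ) - j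

/-- A mixed strategy over the investments `{0, 1, ..., R}`. -/
def IsMixed (R : ℕ) (s : ℕ → ℝ) : Prop :=
  (∀ i, 0 ≤ s i) ∧ (∀ i, R < i → s i = 0) ∧ ∑ i ∈ Finset.range (R + 1), s i = 1

/-- Attacker's expected payoff under mixed strategies. -/
noncomputable def PayA (RA RD : ℕ) (a d : ℕ → ℝ) : ℝ :=
  ∑ i ∈ Finset.range (RA + 1), ∑ j ∈ Finset.range (RD + 1), a i * d j * piA RA RD i j

/-- Defender's expected payoff under mixed strategies. -/
noncomputable def PayD (RA RD : ℕ) (a d : ℕ → ℝ) : ℝ :=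
  ∑ i ∈ Finset.range (RA + 1), ∑ j ∈ Finset.range (RD + 1), a i * d j * piD RD i j

/-- Mixed-strategy Nash equilibrium of the A-D game with endowments `RA`, `RD`. -/
def IsNash (RA RD : ℕ) (a d : ℕ → ℝ) : Prop :=
  IsMixed RA a ∧ IsMixed RD d ∧
  (∀ a', IsMixed RA a' → PayA RA RD a' d ≤ PayA RA RD a d) ∧
  (∀ d', IsMixed RD d' → PayD RA RD a d' ≤ PayD RA RD a d)

/-- The `n`-th harmonic number `H_n = 1 + 1/2 + ... + 1/n` (with `H_0 = 0`). -/
noncomputable def H (n : ℕ) : ℝ := ∑ k ∈ Finset.Icc 1 n, (1 : ℝ) / k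

/-- `l` is the upper bound `l*` for endowment `R`:
the unique `1 ≤ l ≤ R - 1` with `H_R - H_{R-l} < 1 < H_R - H_{R-l-1}`. -/
def IsUpperBound (R l : ℕ) : Prop :=
  1 ≤ l ∧ l ≤ R - 1 ∧ H R - H (R - l) < 1 ∧ 1 < H R - H (R - l - 1)

/-- Attacker's equilibrium mixed strategy (defender endowment `R`, upper bound `l`). -/
noncomputable def astar (R l : ℕ) : ℕ → ℝ := fun i =>
  if i = 0 then ((R : ℝ) - l) / R
  else if i ≤ l then ((R : ℝ) - l) / (((R : ℝ) - i + 1) * ((R : ℝ) - i))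
  else 0

/-- Defender's equilibrium mixed strategy (defender endowment `R`, upper bound `l`). -/
noncomputable def dstar (R l : ℕ) : ℕ → ℝ := fun j =>
  if j < l then 1 / ((R : ℝ) - j)
  else if j = l then 1 - ∑ k ∈ Finset.range l, 1 / ((R : ℝ) - k)
  else 0

/-- At equilibrium, the sum of expected payoffs equals `2R - l*`. -/
lemma sumf (R l : ℕ) (h : l < R) :
    ∑ i ∈ Finset.range l, 1/(((R:ℝ)-i)*((R:ℝ)-i-1)) = 1/((R:ℝ)-l) - 1/R := by
  induction l with
  | zero => simp
  | succ n ih =>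
    have hn : n < R := by omega
    have hcast : ((n:ℝ)+1) < R := by exact_mod_cast h
    have h1 : (R:ℝ) - n ≠ 0 := by nlinarith
    have h2 : (R:ℝ) - n - 1 ≠ 0 := by nlinarith
    have h3 : (R:ℝ) - ((n:ℝ)+1) ≠ 0 := by nlinarith
    have key : 1/(((R:ℝ)-n)*((R:ℝ)-n-1)) = 1/((R:ℝ)-((n:ℝ)+1)) - 1/((R:ℝ)-n) := by
      field_simp
      ring
    rw [Finset.sum_range_succ, ih hn, key]
    push_cast
    ring

lemma sumif (R l : ℕ) (h : l < R) :
    ∑ i ∈ Finset.range l, ((i:ℝ)+1)/(((R:ℝ)-i)*((R:ℝ)-i-1))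
      = (l:ℝ)/((R:ℝ)-l) - ∑ j ∈ Finset.range l, 1/((R:ℝ)-j) := by
  induction l with
  | zero => simp
  | succ n ih =>
    have hn : n < R := by omega
    have hcast : ((n:ℝ)+1) < R := by exact_mod_cast h
    have h1 : (R:ℝ) - n ≠ 0 := by nlinarith
    have h2 : (R:ℝ) - n - 1 ≠ 0 := by nlinarith
    have h3 : (R:ℝ) - ((n:ℝ)+1) ≠ 0 := by nlinarith
    have key : ((n:ℝ)+1)/(((R:ℝ)-n)*((R:ℝ)-n-1))
        = ((n:ℝ)+1)/((R:ℝ)-((n:ℝ)+1)) - ((n:ℝ)+1)/((R:ℝ)-n) := by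
      field_simp
      ring
    rw [Finset.sum_range_succ, ih hn, key, Finset.sum_range_succ]
    push_cast
    ring

lemma asum (R l : ℕ) (h : l < R) (w : ℕ → ℝ) :
    ∑ i ∈ Finset.range (R+1), w i * astar R l i
      = w 0 * (((R:ℝ)-l)/R)
        + ∑ i ∈ Finset.range l, w (i+1) * (((R:ℝ)-l)/(((R:ℝ)-i)*((R:ℝ)-i-1))) := by
  rw [← Finset.sum_subset (Finset.range_subset_range.mpr (by omega : l+1 ≤ R+1))]
  · rw [Finset.sum_range_succ']
    have h0 : w 0 * astar R l 0 = w 0 * (((R:ℝ)-l)/R) := by simp [astar]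
    have hs : ∑ i ∈ Finset.range l, w (i+1) * astar R l (i+1)
        = ∑ i ∈ Finset.range l, w (i+1) * (((R:ℝ)-l)/(((R:ℝ)-i)*((R:ℝ)-i-1))) := by
      apply Finset.sum_congr rfl
      intro i hi
      simp only [Finset.mem_range] at hi
      have : astar R l (i+1) = ((R:ℝ)-l)/(((R:ℝ)-i)*((R:ℝ)-i-1)) := by
        unfold astar
        rw [if_neg (by omega), if_pos (by omega)]
        push_cast
        ring_nf
      rw [this]
    rw [h0, hs, add_comm]
  · intro x hx hxn
    simp only [Finset.mem_range] at hx hxn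
    have : astar R l x = 0 := by
      unfold astar
      rw [if_neg (by omega), if_neg (by omega)]
    simp [this]

lemma dsum (R l : ℕ) (h : l < R) (w : ℕ → ℝ) :
    ∑ j ∈ Finset.range (R+1), w j * dstar R l j
      = (∑ j ∈ Finset.range l, w j * (1/((R:ℝ)-j)))
        + w l * (1 - ∑ k ∈ Finset.range l, 1/((R:ℝ)-k)) := by
  rw [← Finset.sum_subset (Finset.range_subset_range.mpr (by omega : l+1 ≤ R+1))]
  · rw [Finset.sum_range_succ]
    congr 1
    · apply Finset.sum_congr rfl
      intro j hj
      simp only [Finset.mem_range] at hj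
      have : dstar R l j = 1/((R:ℝ)-j) := by
        unfold dstar; rw [if_pos hj]
      rw [this]
    · have : dstar R l l = 1 - ∑ k ∈ Finset.range l, 1/((R:ℝ)-k) := by
        unfold dstar; rw [if_neg (by omega), if_pos rfl]
      rw [this]
  · intro x hx hxn
    simp only [Finset.mem_range] at hx hxn
    have : dstar R l x = 0 := by
      unfold dstar; rw [if_neg (by omega), if_neg (by omega)]
    simp [this]


theorem sum_expected_payoffs (R l : ℕ) (hR : 2 ≤ R) (hl : IsUpperBound R l) :
    PayA R R (astar R l) (dstar R l) + PayD R R (astar R l) (dstar R l)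
      = 2 * (R : ℝ) - l := by
  obtain ⟨hl1, hl2, -, -⟩ := hl
  have hlR : l < R := by omega
  have hcast : (l:ℝ) < R := by exact_mod_cast hlR
  have hRl : (R:ℝ) - l ≠ 0 := by nlinarith
  have hR0 : (R:ℝ) ≠ 0 := by
    have : (0:ℝ) < R := by exact_mod_cast (by omega : 0 < R)
    linarith
  set S := ∑ j ∈ Finset.range l, 1/((R:ℝ)-j) with hS
  -- the four strategy moments
  have hA1 : ∑ i ∈ Finset.range (R+1), astar R l i = 1 := by
    have h := asum R l hlR (fun _ => 1)
    simp only [one_mul] at h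
    rw [h]
    have : ∑ i ∈ Finset.range l, ((R:ℝ)-l)/(((R:ℝ)-i)*((R:ℝ)-i-1))
        = ((R:ℝ)-l) * (1/((R:ℝ)-l) - 1/R) := by
      rw [← sumf R l hlR, Finset.mul_sum]
      apply Finset.sum_congr rfl
      intro i _
      rw [mul_one_div]
    rw [this]
    field_simp
    ring
  have hA2 : ∑ i ∈ Finset.range (R+1), (i:ℝ) * astar R l i = (l:ℝ) - ((R:ℝ)-l)*S := by
    have h := asum R l hlR (fun i => (i:ℝ))
    rw [h]
    simp only [Nat.cast_zero, zero_mul, zero_add, Nat.cast_add, Nat.cast_one]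
    have h2 : ∀ i ∈ Finset.range l, ((i:ℝ)+1) * (((R:ℝ)-l)/(((R:ℝ)-i)*((R:ℝ)-i-1)))
        = ((R:ℝ)-l) * (((i:ℝ)+1)/(((R:ℝ)-i)*((R:ℝ)-i-1))) := by
      intro i _; ring
    rw [Finset.sum_congr rfl h2, ← Finset.mul_sum, sumif R l hlR, ← hS, mul_sub]
    have : ((R:ℝ)-l) * ((l:ℝ)/((R:ℝ)-l)) = (l:ℝ) := by field_simp
    rw [this]
  have hD1 : ∑ j ∈ Finset.range (R+1), dstar R l j = 1 := by
    have h := dsum R l hlR (fun _ => 1)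
    simp only [one_mul] at h
    rw [h, ← hS]
    ring
  have hD2 : ∑ j ∈ Finset.range (R+1), (j:ℝ) * dstar R l j = ((R:ℝ)-l)*S := by
    have h := dsum R l hlR (fun j => (j:ℝ))
    rw [h]
    have hj : ∀ j ∈ Finset.range l, (j:ℝ) * (1/((R:ℝ)-j))
        = (R:ℝ)*(1/((R:ℝ)-j)) - 1 := by
      intro j hj
      simp only [Finset.mem_range] at hj
      have hjR : (j:ℝ) < R := by exact_mod_cast (by omega : j < R)
      have hne : (R:ℝ) - j ≠ 0 := by nlinarith
      field_simp
      ring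
    rw [Finset.sum_congr rfl hj, Finset.sum_sub_distrib, ← Finset.mul_sum, ← hS,
      Finset.sum_const, Finset.card_range]
    simp only [nsmul_eq_mul, mul_one]
    ring
  -- combine
  have key : ∀ i j : ℕ, astar R l i * dstar R l j * piA R R i j
      + astar R l i * dstar R l j * piD R i j
      = astar R l i * dstar R l j * (2*(R:ℝ) - i - j) := by
    intro i j
    unfold piA piD
    by_cases hij : j < i <;> simp only [hij, if_pos, if_neg, if_true, if_false] <;> ring
  have inner : ∀ i : ℕ, ∑ j ∈ Finset.range (R+1),
        astar R l i * dstar R l j * (2*(R:ℝ) - i - j)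
      = astar R l i * ((2*(R:ℝ) - i) * 1 - ((R:ℝ)-l)*S) := by
    intro i
    have h2 : ∀ j ∈ Finset.range (R+1), astar R l i * dstar R l j * (2*(R:ℝ) - i - j)
        = astar R l i * ((2*(R:ℝ) - i) * dstar R l j - (j:ℝ) * dstar R l j) := by
      intro j _; ring
    rw [Finset.sum_congr rfl h2, ← Finset.mul_sum, Finset.sum_sub_distrib,
      ← Finset.mul_sum, hD1, hD2]
  calc PayA R R (astar R l) (dstar R l) + PayD R R (astar R l) (dstar R l)
      = ∑ i ∈ Finset.range (R+1), ∑ j ∈ Finset.range (R+1),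
          astar R l i * dstar R l j * (2*(R:ℝ) - i - j) := by
        unfold PayA PayD
        rw [← Finset.sum_add_distrib]
        apply Finset.sum_congr rfl
        intro i _
        rw [← Finset.sum_add_distrib]
        exact Finset.sum_congr rfl fun j _ => key i j
    _ = ∑ i ∈ Finset.range (R+1),
          ((2*(R:ℝ) - ((R:ℝ)-l)*S) * astar R l i - (i:ℝ) * astar R l i) := by
        refine Finset.sum_congr rfl fun i _ => ?_
        rw [inner i]
        ring
    _ = 2 * (R:ℝ) - l := by
        rw [Finset.sum_sub_distrib, ← Finset.mul_sum, hA1, hA2]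
        ring
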